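/- For every finite abelian group G with subgroup H, the Davenport constant satisfies D(G) ≤ D_{D(H)}(G/H), where D_m denotes the m-th Davenport constant. -/

import Mathlib

/-- The `m`-th Davenport constant: smallest `t` such that every sequence (multiset) over `G`
of length `≥ t` contains `m` disjoint non-empty zero-sum subsequences. -/
noncomputable def DavenportM (G : Type*) [AddCommGroup G] (m : ℕ) : ℕ :=
  sInf {t | ∀ S : Multiset G, t ≤ Multiset.card S →
    ∃ L : Multiset (Multiset G), Multiset.card L = m ∧
      (∀ T ∈ L, T ≠ 0 ∧ T.sum = 0) ∧ L.sum ≤ S}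

/-- The Davenport constant: smallest `t` such that every sequence over `G` of length `≥ t`
has a non-empty zero-sum subsequence. -/
noncomputable def Davenport (G : Type*) [AddCommGroup G] : ℕ :=
  sInf {t | ∀ S : Multiset G, t ≤ Multiset.card S → ∃ T ≤ S, T ≠ 0 ∧ T.sum = 0}

/-- `η(G)`: smallest `t` such that every sequence over `G` of length `≥ t` has a non-empty
zero-sum subsequence of length at most `exp G`. -/
noncomputable def etaC (G : Type*) [AddCommGroup G] : ℕ :=
  sInf {t | ∀ S : Multiset G, t ≤ Multiset.card S →
    ∃ T ≤ S, T ≠ 0 ∧ T.sum = 0 ∧ Multiset.card T ≤ AddMonoid.exponent G}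

/-- The Erdős–Ginzburg–Ziv constant `s(G)`: smallest `t` such that every sequence over `G` of
length `≥ t` has a zero-sum subsequence of length exactly `exp G`. -/
noncomputable def egz (G : Type*) [AddCommGroup G] : ℕ :=
  sInf {t | ∀ S : Multiset G, t ≤ Multiset.card S →
    ∃ T ≤ S, T.sum = 0 ∧ Multiset.card T = AddMonoid.exponent G}


lemma lift_of_le_map {α β : Type*} (f : α → β) :
    ∀ (M : Multiset β) (S : Multiset α), M ≤ S.map f → ∃ M' ≤ S, M'.map f = M := by
  classical
  intro M
  induction M using Multiset.induction with
  | empty => intro S _; exact ⟨0, Multiset.zero_le S, rfl⟩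
  | cons b M ih =>
    intro S h
    have hb : b ∈ S.map f := Multiset.mem_of_le h (Multiset.mem_cons_self _ _)
    obtain ⟨a, ha, hfa⟩ := Multiset.mem_map.1 hb
    have hS : S = a ::ₘ S.erase a := (Multiset.cons_erase ha).symm
    have h2 : M ≤ (S.erase a).map f := by
      have h3 : b ::ₘ M ≤ f a ::ₘ (S.erase a).map f := by
        rw [← Multiset.map_cons, ← hS]; exact h
      rw [← hfa] at h3
      exact (Multiset.cons_le_cons_iff (f a)).1 h3
    obtain ⟨M', hM'le, hM'⟩ := ih (S.erase a) h2
    exact ⟨a ::ₘ M', by rw [hS]; exact Multiset.cons_le_cons _ hM'le,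
      by rw [Multiset.map_cons, hM', hfa]⟩

lemma exists_zerosum {G : Type*} [AddCommGroup G] [Fintype G] (S : Multiset G)
    (h : Fintype.card G ≤ Multiset.card S) :
    ∃ T ≤ S, T ≠ 0 ∧ T.sum = 0 ∧ Multiset.card T ≤ Fintype.card G := by
  set c := Fintype.card G with hc
  set l := S.toList with hlS
  have hl : c ≤ l.length := by rwa [hlS, Multiset.length_toList]
  have hninj : ¬ Function.Injective (fun i : Fin (c+1) => ((l.take i).sum : G)) := by
    intro hinj
    have h2 := Fintype.card_le_of_injective _ hinj
    simp only [Fintype.card_fin, ← hc] at h2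
    omega
  rw [Function.not_injective_iff] at hninj
  obtain ⟨i, j, hij, hne⟩ := hninj
  have main : ∀ i j : Fin (c+1), (i : ℕ) < (j : ℕ) →
      (l.take i).sum = (l.take j).sum → ∃ T ≤ S, T ≠ 0 ∧ T.sum = 0 ∧ Multiset.card T ≤ c := by
    clear hij hne i j
    intro i j hlt hij
    refine ⟨((l.drop i).take ((j:ℕ) - i) : List G), ?_, ?_, ?_, ?_⟩
    · have hsub : ((l.drop i).take ((j:ℕ) - i)).Sublist l :=
        (List.take_sublist _ _).trans (List.drop_sublist _ _)
      have h4 := hsub.subperm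
      rw [← Multiset.coe_le] at h4
      rwa [hlS, Multiset.coe_toList] at h4
    · intro h0
      have hlen : ((l.drop i).take ((j:ℕ) - i)).length = (j:ℕ) - i := by
        rw [List.length_take, List.length_drop]
        have hj : (j:ℕ) ≤ c := Nat.lt_succ_iff.1 j.isLt
        omega
      have h5 : ((l.drop i).take ((j:ℕ) - i)).length = 0 := by
        rw [← Multiset.coe_card, h0]; simp
      omega
    · have hkey : l.take (j:ℕ) = l.take (i:ℕ) ++ (l.drop i).take ((j:ℕ) - i) := by
        have h6 : (j:ℕ) = (i:ℕ) + ((j:ℕ) - i) := by omega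
        rw [h6, List.take_add]
        have h8 : (i:ℕ) + ((j:ℕ) - i) - i = (j:ℕ) - i := by omega
        rw [h8]
      have h7 := congrArg List.sum hkey
      rw [List.sum_append, ← hij] at h7
      have hsum : ((l.drop i).take ((j:ℕ) - i)).sum = 0 := by
        exact (add_eq_left.1 h7.symm)
      simpa using hsum
    · have hlen : ((l.drop i).take ((j:ℕ) - i)).length ≤ (j:ℕ) - i := List.length_take_le _ _
      have hj : (j:ℕ) ≤ c := Nat.lt_succ_iff.1 j.isLt
      simp only [Multiset.coe_card]
      omega
  rcases lt_or_gt_of_ne (fun hv : (i:ℕ) = (j:ℕ) => hne (Fin.ext hv)) with hlt | hlt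
  · exact main i j hlt hij
  · exact main j i hlt hij.symm

lemma davenportM_aux {G : Type*} [AddCommGroup G] [Fintype G] (m : ℕ) :
    ∀ S : Multiset G, m * Fintype.card G ≤ Multiset.card S →
    ∃ L : Multiset (Multiset G), Multiset.card L = m ∧
      (∀ T ∈ L, T ≠ 0 ∧ T.sum = 0) ∧ L.sum ≤ S := by
  classical
  induction m with
  | zero => intro S _; exact ⟨0, rfl, by simp, Multiset.zero_le S⟩
  | succ m ih =>
    intro S hS
    have h1 : Fintype.card G ≤ Multiset.card S := by
      have : Fintype.card G ≤ (m+1) * Fintype.card G := by nlinarith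
      omega
    obtain ⟨T, hTS, hT0, hTsum, hTc⟩ := exists_zerosum S h1
    have hcard : m * Fintype.card G ≤ Multiset.card (S - T) := by
      rw [Multiset.card_sub hTS]
      have h9 : m * Fintype.card G + Fintype.card G ≤ Multiset.card S := by nlinarith
      omega
    obtain ⟨L, hLc, hLp, hLle⟩ := ih (S - T) hcard
    refine ⟨T ::ₘ L, by simp [hLc], ?_, ?_⟩
    · intro U hU
      rcases Multiset.mem_cons.1 hU with rfl | hU
      · exact ⟨hT0, hTsum⟩
      · exact hLp U hU
    · rw [Multiset.sum_cons]
      calc T + L.sum ≤ T + (S - T) := add_le_add_right hLle T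
        _ = S := add_tsub_cancel_of_le hTS

lemma decompose_of_sum_le_map {α β : Type*} (f : α → β) :
    ∀ (L : Multiset (Multiset β)) (S : Multiset α), L.sum ≤ S.map f →
      ∃ L' : Multiset (Multiset α), L'.map (Multiset.map f) = L ∧ L'.sum ≤ S := by
  classical
  intro L
  induction L using Multiset.induction with
  | empty => intro S _; exact ⟨0, rfl, Multiset.zero_le S⟩
  | cons T L ih =>
    intro S h
    rw [Multiset.sum_cons] at h
    have hT : T ≤ S.map f := le_trans (Multiset.le_add_right T L.sum) h
    obtain ⟨T', hT'S, hT'⟩ := lift_of_le_map f T S hT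
    have hsplit : S.map f = T + (S - T').map f := by
        conv_lhs => rw [← add_tsub_cancel_of_le hT'S]
        rw [Multiset.map_add, hT']
    have h2 : L.sum ≤ (S - T').map f := by
      rw [hsplit] at h
      exact le_of_add_le_add_left h
    obtain ⟨L', hL'map, hL'le⟩ := ih (S - T') h2
    refine ⟨T' ::ₘ L', by rw [Multiset.map_cons, hT', hL'map], ?_⟩
    rw [Multiset.sum_cons]
    calc T' + L'.sum ≤ T' + (S - T') := add_le_add_right hL'le T'
      _ = S := add_tsub_cancel_of_le hT'S

lemma sum_sum {α : Type*} [AddCommMonoid α] (L : Multiset (Multiset α)) :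
    L.sum.sum = (L.map Multiset.sum).sum := by
  induction L using Multiset.induction with
  | empty => simp
  | cons T L ih => simp [ih]

theorem stmt_0 (G : Type*) [AddCommGroup G] [Fintype G] (H : AddSubgroup G) :
    Davenport G ≤ DavenportM (G ⧸ H) (Davenport H) := by
  classical
  letI : Fintype H := Fintype.ofFinite H
  letI : Fintype (G ⧸ H) := Fintype.ofFinite (G ⧸ H)
  set m := Davenport H with hmdef
  have hmmem : ∀ S : Multiset H, m ≤ Multiset.card S → ∃ T ≤ S, T ≠ 0 ∧ T.sum = 0 := by
    have := Nat.sInf_mem (s := {t | ∀ S : Multiset H, t ≤ Multiset.card S →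
        ∃ T ≤ S, T ≠ 0 ∧ T.sum = 0}) ⟨Fintype.card H, fun S hS => by
      obtain ⟨T, hTS, hT0, hTsum, _⟩ := exists_zerosum S hS
      exact ⟨T, hTS, hT0, hTsum⟩⟩
    exact this
  have htmem : ∀ S : Multiset (G ⧸ H), DavenportM (G ⧸ H) m ≤ Multiset.card S →
      ∃ L : Multiset (Multiset (G ⧸ H)), Multiset.card L = m ∧
        (∀ T ∈ L, T ≠ 0 ∧ T.sum = 0) ∧ L.sum ≤ S := by
    have := Nat.sInf_mem (s := {t | ∀ S : Multiset (G ⧸ H), t ≤ Multiset.card S →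
        ∃ L : Multiset (Multiset (G ⧸ H)), Multiset.card L = m ∧
          (∀ T ∈ L, T ≠ 0 ∧ T.sum = 0) ∧ L.sum ≤ S}) ⟨m * Fintype.card (G ⧸ H), davenportM_aux m⟩
    exact this
  apply Nat.sInf_le
  intro S hS
  set f : G → G ⧸ H := QuotientAddGroup.mk with hf
  have hcard : DavenportM (G ⧸ H) m ≤ Multiset.card (S.map f) := by rwa [Multiset.card_map]
  obtain ⟨L, hLcard, hLprop, hLle⟩ := htmem (S.map f) hcard
  obtain ⟨L', hL'map, hL'le⟩ := decompose_of_sum_le_map f L S hLle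
  have hmemH : ∀ T' ∈ L', T' ≠ 0 ∧ T'.sum ∈ H := by
    intro T' hT'
    have hmem : T'.map f ∈ L := by rw [← hL'map]; exact Multiset.mem_map_of_mem _ hT'
    obtain ⟨hne, hzero⟩ := hLprop _ hmem
    refine ⟨?_, ?_⟩
    · rintro rfl; simp at hne
    · rw [← QuotientAddGroup.eq_zero_iff]
      have hhom : (QuotientAddGroup.mk' H) T'.sum = (T'.map f).sum := by
        rw [map_multiset_sum]
        rfl
      rw [← hzero, ← hhom]
      rfl
  set g : Multiset G → H := fun T => if h : T.sum ∈ H then (⟨T.sum, h⟩ : H) else 0 with hg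
  set Lm := L'.map g with hLm
  have hLmcard : Multiset.card Lm = m := by
    rw [hLm, Multiset.card_map]
    have : Multiset.card (L'.map (Multiset.map f)) = Multiset.card L' := Multiset.card_map _ _
    rw [hL'map] at this
    omega
  obtain ⟨U, hUle, hU0, hUsum⟩ := hmmem Lm (le_of_eq hLmcard.symm)
  obtain ⟨U', hU'le, hU'map⟩ := lift_of_le_map g U L' hUle
  refine ⟨U'.sum, ?_, ?_, ?_⟩
  · obtain ⟨d, hd⟩ := Multiset.le_iff_exists_add.1 hU'le
    calc U'.sum ≤ U'.sum + d.sum := Multiset.le_add_right _ _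
      _ = L'.sum := by rw [hd, Multiset.sum_add]
      _ ≤ S := hL'le
  · have hU'0 : U' ≠ 0 := by rintro rfl; rw [← hU'map] at hU0; simp at hU0
    obtain ⟨T₀, hT₀⟩ := Multiset.exists_mem_of_ne_zero hU'0
    have hT₀0 : T₀ ≠ 0 := (hmemH T₀ (Multiset.mem_of_le hU'le hT₀)).1
    intro h0
    obtain ⟨V, hV⟩ := Multiset.exists_cons_of_mem hT₀
    rw [hV, Multiset.sum_cons] at h0
    have : T₀ ≤ (0 : Multiset G) := h0 ▸ Multiset.le_add_right _ _
    exact hT₀0 (Multiset.le_zero.1 this)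
  · rw [sum_sum]
    have hcongr : U'.map Multiset.sum = U'.map (fun T => ((g T : H) : G)) := by
      apply Multiset.map_congr rfl
      intro T hT
      have hTH : T.sum ∈ H := (hmemH T (Multiset.mem_of_le hU'le hT)).2
      rw [hg]
      simp [dif_pos hTH]
    rw [hcongr]
    have : U'.map (fun T => ((g T : H) : G)) = (U'.map g).map (fun h => ((h : H) : G)) := by
      rw [Multiset.map_map]
      rfl
    rw [this, hU'map]
    have := map_multiset_sum H.subtype U
    have hcoe : (U.map (fun h => ((h : H) : G))).sum = H.subtype U.sum := by
      rw [map_multiset_sum]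
      rfl
    rw [hcoe, hUsum]
    simp
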